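/- Let p be a prime with p > 3, let r ≥ 1 and q = p^r, and let n ≥ 2. Let k be an algebraically closed field of characteristic p and let φ : 𝔽_q → k be a ring homomorphism. Then the first group cohomology H^1(Sp_{2n}(𝔽_q), k^{2n}) of the finite symplectic group Sp_{2n}(𝔽_q) with coefficients in the natural module k^{2n} (action induced by φ) is zero. -/

import Mathlib

open Matrix

/-- The natural representation of the finite symplectic group `Sp_{2n}(𝔽_q)` on `k^{2n}`
(coordinates indexed by `Fin n ⊕ Fin n`), acting by applying `φ` entrywise and then by
matrix–vector multiplication. -/
noncomputable def natRepSp (p r n : ℕ) [Fact p.Prime] (k : Type) [Field k]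
    (φ : GaloisField p r →+* k) :
    Representation k (Matrix.symplecticGroup (Fin n) (GaloisField p r))
      ((Fin n ⊕ Fin n) → k) where
  toFun M := ((M : Matrix (Fin n ⊕ Fin n) (Fin n ⊕ Fin n) (GaloisField p r)).map φ).mulVecLin
  map_one' := by
    simp only [Submonoid.coe_one, Matrix.map_one φ (map_zero φ) (_root_.map_one φ),
      Matrix.mulVecLin_one]
    rfl
  map_mul' A B := by
    simp only [Submonoid.coe_mul, Matrix.map_mul, Matrix.mulVecLin_mul,
      Module.End.mul_eq_comp]

/-- **Vanishing of `H¹` for `Sp_{2n}(𝔽_q)` with coefficients in the natural module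
(type `Cₙ`, minuscule weight `ω₁`; the 1975 Cline–Parshall–Scott result).**
Let `p > 3` be a prime, `q = p ^ r` with `r ≥ 1`, let `n ≥ 2`, and let `k` be an
algebraically closed field of characteristic `p`.  Then `H¹(Sp_{2n}(𝔽_q), k^{2n}) = 0`,
where the action is induced by a ring homomorphism `φ : 𝔽_q → k`. -/
theorem H1_Sp_natural_eq_zero (p r n : ℕ) [Fact p.Prime]
    (hp : 3 < p) (hr : 1 ≤ r) (hn : 2 ≤ n)
    (k : Type) [Field k] [IsAlgClosed k] [CharP k p] (φ : GaloisField p r →+* k) :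
    Subsingleton (groupCohomology (Rep.of (natRepSp p r n k φ)) 1) := by
  set A := Rep.of (natRepSp p r n k φ) with hA
  -- It suffices to show H1 (cocycles mod coboundaries) is subsingleton.
  suffices h : Subsingleton (groupCohomology.H1 A) by
    exact h
  -- The central element `-1`.
  set z : Matrix.symplecticGroup (Fin n) (GaloisField p r) :=
    ⟨-1, SymplecticGroup.neg_mem (one_mem _)⟩ with hz
  have hzact : ∀ v : (Fin n ⊕ Fin n) → k, A.ρ z v = -v := by
    intro v
    show ((((-1 : Matrix (Fin n ⊕ Fin n) (Fin n ⊕ Fin n) (GaloisField p r))).map φ).mulVecLin) v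
      = -v
    have : ((-1 : Matrix (Fin n ⊕ Fin n) (Fin n ⊕ Fin n) (GaloisField p r)).map φ)
        = -(1 : Matrix (Fin n ⊕ Fin n) (Fin n ⊕ Fin n) k) := by
      ext i j
      simp [Matrix.map_apply, Matrix.one_apply, apply_ite φ]
    rw [this]
    simp [Matrix.mulVecLin_apply, Matrix.neg_mulVec]
  -- two is invertible in k
  have h2 : (2 : k) ≠ 0 := by
    have := Fact.out (p := p.Prime)
    intro h
    have hpd : (p : ℕ) ∣ 2 := (CharP.cast_eq_zero_iff k p 2).1 (by exact_mod_cast h)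
    have := Nat.le_of_dvd (by norm_num) hpd
    omega
  constructor
  intro a b
  induction a using groupCohomology.H1_induction_on with | h f => ?_
  induction b using groupCohomology.H1_induction_on with | h g => ?_
  have key : ∀ f : groupCohomology.cocycles₁ A,
      groupCohomology.H1π A f = 0 := by
    intro f
    rw [groupCohomology.H1π_eq_zero_iff]
    have hcoc := (groupCohomology.mem_cocycles₁_iff (f : _ → _)).1 f.2
    -- take x = -(2⁻¹) • f z
    refine ⟨-(2⁻¹ : k) • (f : _ → _) z, funext fun g => ?_⟩
    show A.ρ g (-(2⁻¹ : k) • (f : _ → _) z) - -(2⁻¹ : k) • (f : _ → _) z = (f : _ → _) g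
    have h1 := hcoc z g
    have h2' := hcoc g z
    have hcomm : z * g = g * z := by
      ext1
      simp only [Submonoid.coe_mul, hz]
      exact (neg_one_mul _).trans (mul_neg_one _).symm
    rw [← hcomm, h1, hzact] at h2'
    -- h2' : ρ g (f z) + f g = - f g + f z
    have hfg : (2 : k) • (f : _ → _) g = (f : _ → _) z - A.ρ g ((f : _ → _) z) := by
      have := h2'
      rw [two_smul]
      linear_combination (norm := module) -this
    have := congrArg (fun v => (2⁻¹ : k) • v) hfg
    simp only [smul_smul, inv_mul_cancel₀ h2, one_smul] at this
    rw [LinearMap.map_smul, this]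
    module
  rw [key f, key g]
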